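/- Let K be a field of characteristic not 2, a ∈ K^×, and let τ, λ be the K-automorphisms of K(x,y,z) with τ: x ↦ a/x, y ↦ a/y, z ↦ z, and λ: x ↦ a/x, y ↦ y, z ↦ a/z. Then K(x,y,z)^⟨τ,λ⟩ = K(v₁, v₂, v₃), where v₁ = (a(−x+y+z) − xyz)/(a − xy − xz + yz), v₂ = (a(x−y+z) − xyz)/(a − xy + xz − yz), and v₃ = (a(x+y−z) − xyz)/(a + xy − xz − yz). In particular this fixed field is rational over K. -/

import Mathlib

open MvPolynomial IntermediateField

set_option linter.unusedSectionVars false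
set_option maxHeartbeats 1000000
set_option synthInstance.maxHeartbeats 400000

section Aux
variable {K F : Type*} [Field K] [Field F] [Algebra K F]
    [Algebra (MvPolynomial (Fin 3) K) F]
    [IsScalarTower K (MvPolynomial (Fin 3) K) F]
    [IsFractionRing (MvPolynomial (Fin 3) K) F]

theorem aux_ne_zero (p : MvPolynomial (Fin 3) K) (pt : Fin 3 → K)
    (hp : MvPolynomial.eval pt p ≠ 0) :
    algebraMap (MvPolynomial (Fin 3) K) F p ≠ 0 := by
  intro h0
  apply hp
  have hp0 : p = 0 := IsFractionRing.injective (MvPolynomial (Fin 3) K) F (by rw [h0, map_zero])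
  rw [hp0, map_zero]

theorem aux_algEquiv_ext (g h : F ≃ₐ[K] F)
    (hX : ∀ i, g (algebraMap (MvPolynomial (Fin 3) K) F (X i)) =
      h (algebraMap (MvPolynomial (Fin 3) K) F (X i))) : g = h := by
  have hpoly : ∀ p : MvPolynomial (Fin 3) K,
      g (algebraMap (MvPolynomial (Fin 3) K) F p) = h (algebraMap (MvPolynomial (Fin 3) K) F p) := by
    intro p
    induction p using MvPolynomial.induction_on with
    | C r =>
        rw [← MvPolynomial.algebraMap_eq, ← IsScalarTower.algebraMap_apply,
          AlgEquiv.commutes, AlgEquiv.commutes]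
    | add p q hp hq => rw [map_add, map_add, map_add, hp, hq]
    | mul_X p i hp => rw [map_mul, map_mul, map_mul, hp, hX i]
  ext u
  obtain ⟨p, q, -, rfl⟩ := IsFractionRing.div_surjective (A := MvPolynomial (Fin 3) K) u
  rw [map_div₀, map_div₀, hpoly, hpoly]

theorem aux_mem_subfield (S : Subfield F) (hC : ∀ r : K, algebraMap K F r ∈ S)
    (hX : ∀ i, algebraMap (MvPolynomial (Fin 3) K) F (X i) ∈ S) (u : F) : u ∈ S := by
  have hpoly : ∀ p : MvPolynomial (Fin 3) K, algebraMap (MvPolynomial (Fin 3) K) F p ∈ S := by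
    intro p
    induction p using MvPolynomial.induction_on with
    | C r =>
        rw [← MvPolynomial.algebraMap_eq, ← IsScalarTower.algebraMap_apply]
        exact hC r
    | add p q hp hq => rw [map_add]; exact S.add_mem hp hq
    | mul_X p i hp => rw [map_mul]; exact S.mul_mem hp (hX i)
  obtain ⟨p, q, -, rfl⟩ := IsFractionRing.div_surjective (A := MvPolynomial (Fin 3) K) u
  exact S.div_mem (hpoly p) (hpoly q)

end Aux

theorem fixed_field_G311 (K F : Type*) [Field K] [Field F]
    [Algebra K F] [Algebra (MvPolynomial (Fin 3) K) F]
    [IsScalarTower K (MvPolynomial (Fin 3) K) F]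
    [IsFractionRing (MvPolynomial (Fin 3) K) F]
    (h2 : (2 : K) ≠ 0) (a : K) (ha : a ≠ 0)
    (x y z : F)
    (hx : x = algebraMap (MvPolynomial (Fin 3) K) F (X 0))
    (hy : y = algebraMap (MvPolynomial (Fin 3) K) F (X 1))
    (hz : z = algebraMap (MvPolynomial (Fin 3) K) F (X 2))
    (τ lam : F ≃ₐ[K] F)
    (hτx : τ x = algebraMap K F a / x) (hτy : τ y = algebraMap K F a / y) (hτz : τ z = z)
    (hlx : lam x = algebraMap K F a / x) (hly : lam y = y) (hlz : lam z = algebraMap K F a / z) :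
    fixedField (Subgroup.closure {τ, lam}) =
      adjoin K
        {(algebraMap K F a * (-x + y + z) - x * y * z) /
            (algebraMap K F a - x * y - x * z + y * z),
         (algebraMap K F a * (x - y + z) - x * y * z) /
            (algebraMap K F a - x * y + x * z - y * z),
         (algebraMap K F a * (x + y - z) - x * y * z) /
            (algebraMap K F a + x * y - x * z - y * z)} := by
  classical
  set A : F := algebraMap K F a with hAdef
  set v1 : F := (A * (-x + y + z) - x * y * z) / (A - x * y - x * z + y * z) with hv1
  set v2 : F := (A * (x - y + z) - x * y * z) / (A - x * y + x * z - y * z) with hv2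
  set v3 : F := (A * (x + y - z) - x * y * z) / (A + x * y - x * z - y * z) with hv3
  -- basic nonvanishing
  have hAC : A = algebraMap (MvPolynomial (Fin 3) K) F (MvPolynomial.C a) := by
    rw [hAdef, IsScalarTower.algebraMap_apply K (MvPolynomial (Fin 3) K) F,
      MvPolynomial.algebraMap_eq]
  have hx0 : x ≠ 0 := by
    rw [hx]; exact aux_ne_zero _ (fun _ => 1) (by simp)
  have hy0 : y ≠ 0 := by
    rw [hy]; exact aux_ne_zero _ (fun _ => 1) (by simp)
  have hz0 : z ≠ 0 := by
    rw [hz]; exact aux_ne_zero _ (fun _ => 1) (by simp)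
  have hA0 : A ≠ 0 := by
    rw [hAC]; exact aux_ne_zero _ (fun _ => 0) (by simp [ha])
  have h2F : (2 : F) ≠ 0 := by
    have : (2 : F) = algebraMap K F 2 := (map_ofNat (algebraMap K F) 2).symm
    rw [this]
    exact fun h0 => h2 ((algebraMap K F).injective (by rw [h0, map_zero]))
  have hD1 : A - x * y - x * z + y * z ≠ 0 := by
    have : A - x * y - x * z + y * z = algebraMap (MvPolynomial (Fin 3) K) F
        (MvPolynomial.C a - X 0 * X 1 - X 0 * X 2 + X 1 * X 2) := by
      simp only [map_add, map_sub, map_mul, ← hAC, ← hx, ← hy, ← hz]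
    rw [this]; exact aux_ne_zero _ (fun _ => 0) (by simp [ha])
  have hD2 : A - x * y + x * z - y * z ≠ 0 := by
    have : A - x * y + x * z - y * z = algebraMap (MvPolynomial (Fin 3) K) F
        (MvPolynomial.C a - X 0 * X 1 + X 0 * X 2 - X 1 * X 2) := by
      simp only [map_add, map_sub, map_mul, ← hAC, ← hx, ← hy, ← hz]
    rw [this]; exact aux_ne_zero _ (fun _ => 0) (by simp [ha])
  have hD3 : A + x * y - x * z - y * z ≠ 0 := by
    have : A + x * y - x * z - y * z = algebraMap (MvPolynomial (Fin 3) K) F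
        (MvPolynomial.C a + X 0 * X 1 - X 0 * X 2 - X 1 * X 2) := by
      simp only [map_add, map_sub, map_mul, ← hAC, ← hx, ← hy, ← hz]
    rw [this]; exact aux_ne_zero _ (fun _ => 0) (by simp [ha])
  have hAxx : A - x * x ≠ 0 := by
    have : A - x * x = algebraMap (MvPolynomial (Fin 3) K) F
        (MvPolynomial.C a - X 0 * X 0) := by
      simp only [map_sub, map_mul, ← hAC, ← hx]
    rw [this]; exact aux_ne_zero _ (fun _ => 0) (by simp [ha])
  have hAyy : A - y * y ≠ 0 := by
    have : A - y * y = algebraMap (MvPolynomial (Fin 3) K) F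
        (MvPolynomial.C a - X 1 * X 1) := by
      simp only [map_sub, map_mul, ← hAC, ← hy]
    rw [this]; exact aux_ne_zero _ (fun _ => 0) (by simp [ha])
  have hAzz : A - z * z ≠ 0 := by
    have : A - z * z = algebraMap (MvPolynomial (Fin 3) K) F
        (MvPolynomial.C a - X 2 * X 2) := by
      simp only [map_sub, map_mul, ← hAC, ← hz]
    rw [this]; exact aux_ne_zero _ (fun _ => 0) (by simp [ha])
  -- invariance of v's
  have hτA : τ A = A := τ.commutes a
  have hlA : lam A = A := lam.commutes a
  have hτv1 : τ v1 = v1 := by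
    have hden : τ (A - x * y - x * z + y * z) ≠ 0 :=
      fun h0 => hD1 (by simpa using τ.injective (by rw [h0, map_zero]))
    rw [hv1, map_div₀, div_eq_div_iff hden hD1]
    simp only [map_sub, map_add, map_mul, map_neg, hτx, hτy, hτz, hτA]
    field_simp [hx0, hy0, hz0]
    ring
  have hτv2 : τ v2 = v2 := by
    have hden : τ (A - x * y + x * z - y * z) ≠ 0 :=
      fun h0 => hD2 (by simpa using τ.injective (by rw [h0, map_zero]))
    rw [hv2, map_div₀, div_eq_div_iff hden hD2]
    simp only [map_sub, map_add, map_mul, map_neg, hτx, hτy, hτz, hτA]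
    field_simp [hx0, hy0, hz0]
    ring
  have hτv3 : τ v3 = v3 := by
    have hden : τ (A + x * y - x * z - y * z) ≠ 0 :=
      fun h0 => hD3 (by simpa using τ.injective (by rw [h0, map_zero]))
    rw [hv3, map_div₀, div_eq_div_iff hden hD3]
    simp only [map_sub, map_add, map_mul, map_neg, hτx, hτy, hτz, hτA]
    field_simp [hx0, hy0, hz0]
    ring
  have hlv1 : lam v1 = v1 := by
    have hden : lam (A - x * y - x * z + y * z) ≠ 0 :=
      fun h0 => hD1 (by simpa using lam.injective (by rw [h0, map_zero]))
    rw [hv1, map_div₀, div_eq_div_iff hden hD1]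
    simp only [map_sub, map_add, map_mul, map_neg, hlx, hly, hlz, hlA]
    field_simp [hx0, hy0, hz0]
    ring
  have hlv2 : lam v2 = v2 := by
    have hden : lam (A - x * y + x * z - y * z) ≠ 0 :=
      fun h0 => hD2 (by simpa using lam.injective (by rw [h0, map_zero]))
    rw [hv2, map_div₀, div_eq_div_iff hden hD2]
    simp only [map_sub, map_add, map_mul, map_neg, hlx, hly, hlz, hlA]
    field_simp [hx0, hy0, hz0]
    ring
  have hlv3 : lam v3 = v3 := by
    have hden : lam (A + x * y - x * z - y * z) ≠ 0 :=
      fun h0 => hD3 (by simpa using lam.injective (by rw [h0, map_zero]))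
    rw [hv3, map_div₀, div_eq_div_iff hden hD3]
    simp only [map_sub, map_add, map_mul, map_neg, hlx, hly, hlz, hlA]
    field_simp [hx0, hy0, hz0]
    ring
  -- fixed-field membership from invariance under the two generators
  have hfix : ∀ u : F, τ u = u → lam u = u →
      u ∈ fixedField (Subgroup.closure ({τ, lam} : Set (F ≃ₐ[K] F))) := by
    intro u h1 h2'
    have hall : ∀ g ∈ Subgroup.closure ({τ, lam} : Set (F ≃ₐ[K] F)), g u = u := by
      intro g hg
      refine Subgroup.closure_induction ?_ ?_ ?_ ?_ hg
      · intro g' hg'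
        simp only [Set.mem_insert_iff, Set.mem_singleton_iff] at hg'
        rcases hg' with rfl | rfl
        · exact h1
        · exact h2'
      · rfl
      · intro g1 g2 _ _ p1 p2
        rw [AlgEquiv.mul_apply, p2, p1]
      · intro g1 _ p1
        have h3 : g1⁻¹ (g1 u) = u := by
          rw [← AlgEquiv.mul_apply, inv_mul_cancel, AlgEquiv.one_apply]
        conv_lhs => rw [← p1]
        exact h3
    exact fun g => hall g.1 g.2
  have hle : adjoin K ({v1, v2, v3} : Set F) ≤
      fixedField (Subgroup.closure ({τ, lam} : Set (F ≃ₐ[K] F))) := by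
    rw [IntermediateField.adjoin_le_iff]
    rintro u hu
    simp only [Set.mem_insert_iff, Set.mem_singleton_iff] at hu
    rcases hu with rfl | rfl | rfl
    · exact hfix _ hτv1 hlv1
    · exact hfix _ hτv2 hlv2
    · exact hfix _ hτv3 hlv3
  -- automorphisms are determined by their values on x, y, z
  have hext : ∀ g h : F ≃ₐ[K] F, g x = h x → g y = h y → g z = h z → g = h := by
    intro g h e1 e2 e3
    refine aux_algEquiv_ext g h ?_
    intro i
    match i with
    | 0 => rw [← hx]; exact e1
    | 1 => rw [← hy]; exact e2
    | 2 => rw [← hz]; exact e3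
  have hAA : ∀ w : F, w ≠ 0 → A / (A / w) = w := by
    intro w hw
    field_simp
  -- relations
  have hττ : τ * τ = 1 := by
    refine hext _ _ ?_ ?_ ?_
    · rw [AlgEquiv.mul_apply, hτx, map_div₀, hτA, hτx, AlgEquiv.one_apply]
      exact hAA x hx0
    · rw [AlgEquiv.mul_apply, hτy, map_div₀, hτA, hτy, AlgEquiv.one_apply]
      exact hAA y hy0
    · rw [AlgEquiv.mul_apply, hτz, hτz, AlgEquiv.one_apply]
  have hll : lam * lam = 1 := by
    refine hext _ _ ?_ ?_ ?_
    · rw [AlgEquiv.mul_apply, hlx, map_div₀, hlA, hlx, AlgEquiv.one_apply]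
      exact hAA x hx0
    · rw [AlgEquiv.mul_apply, hly, hly, AlgEquiv.one_apply]
    · rw [AlgEquiv.mul_apply, hlz, map_div₀, hlA, hlz, AlgEquiv.one_apply]
      exact hAA z hz0
  have hcomm : lam * τ = τ * lam := by
    refine hext _ _ ?_ ?_ ?_
    · rw [AlgEquiv.mul_apply, AlgEquiv.mul_apply, hτx, hlx, map_div₀, map_div₀, hlA, hτA,
        hlx, hτx]
    · rw [AlgEquiv.mul_apply, AlgEquiv.mul_apply, hτy, hly, map_div₀, hlA, hly, hτy]
    · rw [AlgEquiv.mul_apply, AlgEquiv.mul_apply, hτz, hlz, map_div₀, hτA, hτz]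
  have r1 : ∀ w : F ≃ₐ[K] F, τ * (τ * w) = w := by
    intro w; rw [← mul_assoc, hττ, one_mul]
  have r2 : ∀ w : F ≃ₐ[K] F, lam * (lam * w) = w := by
    intro w; rw [← mul_assoc, hll, one_mul]
  have r4 : ∀ w : F ≃ₐ[K] F, lam * (τ * w) = τ * (lam * w) := by
    intro w; rw [← mul_assoc, hcomm, mul_assoc]
  -- distinctness
  have hwne : ∀ w : F, w ≠ 0 → A - w * w ≠ 0 → A / w ≠ w := by
    intro w hw hAw h
    apply hAw
    rw [div_eq_iff hw] at h
    rw [← h]; ring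
  have hAxne : A / x ≠ x := hwne x hx0 hAxx
  have hAyne : A / y ≠ y := hwne y hy0 hAyy
  have hAzne : A / z ≠ z := hwne z hz0 hAzz
  have hτ1 : τ ≠ 1 := fun h => hAxne (by rw [← hτx, h, AlgEquiv.one_apply])
  have hl1 : lam ≠ 1 := fun h => hAzne (by rw [← hlz, h, AlgEquiv.one_apply])
  have hτl : τ ≠ lam := fun h => hAyne (by rw [← hτy, h, hly])
  have hτlyval : (τ * lam) y = A / y := by rw [AlgEquiv.mul_apply, hly, hτy]
  have hτlxval : (τ * lam) x = x := by
    rw [AlgEquiv.mul_apply, hlx, map_div₀, hτA, hτx]; exact hAA x hx0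
  have hτlzval : (τ * lam) z = A / z := by rw [AlgEquiv.mul_apply, hlz, map_div₀, hτA, hτz]
  have hτl1 : τ * lam ≠ 1 := fun h => hAyne (by rw [← hτlyval, h, AlgEquiv.one_apply])
  have hτlτ : τ * lam ≠ τ := fun h => hAzne (by rw [← hτlzval, h, hτz])
  have hτll : τ * lam ≠ lam := fun h => hAxne (by rw [← hlx, ← h, hτlxval])
  -- the subgroup {1, τ, lam, τ*lam}
  let S : Subgroup (F ≃ₐ[K] F) :=
    { carrier := {1, τ, lam, τ * lam}
      one_mem' := by left; rfl
      mul_mem' := by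
        rintro p q hp hq
        simp only [Set.mem_insert_iff, Set.mem_singleton_iff] at hp hq ⊢
        rcases hp with rfl | rfl | rfl | rfl <;> rcases hq with rfl | rfl | rfl | rfl <;>
          simp [mul_assoc, hττ, hll, hcomm, r1, r2, r4]
      inv_mem' := by
        rintro p hp
        simp only [Set.mem_insert_iff, Set.mem_singleton_iff] at hp ⊢
        rcases hp with rfl | rfl | rfl | rfl
        · left; exact inv_one
        · right; left; exact inv_eq_of_mul_eq_one_right hττ
        · right; right; left; exact inv_eq_of_mul_eq_one_right hll
        · right; right; right
          refine inv_eq_of_mul_eq_one_right ?_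
          rw [mul_assoc, r4, hll, r1] }
  have hSmem : ∀ p : F ≃ₐ[K] F, p ∈ S ↔ p ∈ ({1, τ, lam, τ * lam} : Set (F ≃ₐ[K] F)) :=
    fun p => Iff.rfl
  have hclosure : Subgroup.closure ({τ, lam} : Set (F ≃ₐ[K] F)) = S := by
    apply le_antisymm
    · rw [Subgroup.closure_le]
      rintro p hp
      simp only [Set.mem_insert_iff, Set.mem_singleton_iff] at hp
      rcases hp with rfl | rfl
      · rw [SetLike.mem_coe, hSmem]; right; left; rfl
      · rw [SetLike.mem_coe, hSmem]; right; right; left; rfl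
    · intro p hp
      rw [hSmem] at hp
      rcases hp with rfl | rfl | rfl | rfl
      · exact one_mem _
      · exact Subgroup.subset_closure (by left; rfl)
      · exact Subgroup.subset_closure (by right; rfl)
      · exact mul_mem (Subgroup.subset_closure (by left; rfl))
          (Subgroup.subset_closure (by right; rfl))
  have hcard : Nat.card ↥(Subgroup.closure ({τ, lam} : Set (F ≃ₐ[K] F))) = 4 := by
    rw [hclosure]
    have : Nat.card ↥S = Nat.card ↥({1, τ, lam, τ * lam} : Set (F ≃ₐ[K] F)) := rfl
    rw [this, Nat.card_coe_set_eq]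
    rw [Set.ncard_insert_of_notMem (by
      rintro (h | h | h)
      · exact hτ1 h.symm
      · exact hl1 h.symm
      · exact hτl1 h.symm)]
    rw [Set.ncard_insert_of_notMem (by
      rintro (h | h)
      · exact hτl h
      · exact hτlτ h.symm)]
    rw [Set.ncard_pair (fun h => hτll h.symm)]
  -- Artin: the fixed field of our group has degree 4 under F
  have hfinG : Finite ↥(Subgroup.closure ({τ, lam} : Set (F ≃ₐ[K] F))) := by
    rw [hclosure]
    exact Set.Finite.to_subtype
      (((((Set.finite_singleton (τ * lam)).insert lam).insert τ).insert 1))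
  haveI : FaithfulSMul ↥(Subgroup.closure ({τ, lam} : Set (F ≃ₐ[K] F))) F :=
    ⟨fun {g h} hgh => Subtype.ext (AlgEquiv.ext fun u => hgh u)⟩
  have hfr4 : Module.finrank
      ↥(fixedField (Subgroup.closure ({τ, lam} : Set (F ≃ₐ[K] F)))) F = 4 := by
    cases nonempty_fintype ↥(Subgroup.closure ({τ, lam} : Set (F ≃ₐ[K] F)))
    have hc : Fintype.card ↥(Subgroup.closure ({τ, lam} : Set (F ≃ₐ[K] F))) = 4 := by
      rw [← Nat.card_eq_fintype_card]; exact hcard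
    rw [← hc]
    exact FixedPoints.finrank_eq_card _ F
  -- the adjoined field E and memberships
  have hv1E : v1 ∈ adjoin K ({v1, v2, v3} : Set F) :=
    subset_adjoin K _ (by left; rfl)
  have hv2E : v2 ∈ adjoin K ({v1, v2, v3} : Set F) :=
    subset_adjoin K _ (by right; left; rfl)
  have hv3E : v3 ∈ adjoin K ({v1, v2, v3} : Set F) :=
    subset_adjoin K _ (by right; right; rfl)
  have hAE : A ∈ adjoin K ({v1, v2, v3} : Set F) := by
    rw [hAdef]; exact IntermediateField.algebraMap_mem _ a
  have h2E : (2 : F) ∈ adjoin K ({v1, v2, v3} : Set F) := by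
    have : (2 : F) = algebraMap K F 2 := (map_ofNat (algebraMap K F) 2).symm
    rw [this]; exact IntermediateField.algebraMap_mem _ 2
  -- key identities
  have hqx : (v2 + v3) * (x * x) - 2 * (A + v2 * v3) * x + A * (v2 + v3) = 0 := by
    rw [hv2, hv3]
    field_simp [hD2, hD3]
    ring
  have hqy : (v1 + v3) * (y * y) - 2 * (A + v1 * v3) * y + A * (v1 + v3) = 0 := by
    rw [hv1, hv3]
    field_simp [hD1, hD3]
    ring
  have hsx : v2 + v3 = 2 * x * (A - y * y) * (A - z * z) /
      ((A - x * y + x * z - y * z) * (A + x * y - x * z - y * z)) := by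
    rw [hv2, hv3, div_add_div _ _ hD2 hD3,
      div_eq_div_iff (mul_ne_zero hD2 hD3) (mul_ne_zero hD2 hD3)]
    ring
  have hsx0 : v2 + v3 ≠ 0 := by
    rw [hsx]
    exact div_ne_zero (mul_ne_zero (mul_ne_zero (mul_ne_zero h2F hx0) hAyy) hAzz)
      (mul_ne_zero hD2 hD3)
  have hsy : v1 + v3 = 2 * y * (A - x * x) * (A - z * z) /
      ((A - x * y - x * z + y * z) * (A + x * y - x * z - y * z)) := by
    rw [hv1, hv3, div_add_div _ _ hD1 hD3,
      div_eq_div_iff (mul_ne_zero hD1 hD3) (mul_ne_zero hD1 hD3)]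
    ring
  have hsy0 : v1 + v3 ≠ 0 := by
    rw [hsy]
    exact div_ne_zero (mul_ne_zero (mul_ne_zero (mul_ne_zero h2F hy0) hAxx) hAzz)
      (mul_ne_zero hD1 hD3)
  have hzdenval : (v1 * (y - x) + x * y - A) * (A - x * y - x * z + y * z) =
      -((A - x * x) * (A - y * y)) := by
    rw [hv1]
    field_simp [hD1]
    ring
  have hzden : v1 * (y - x) + x * y - A ≠ 0 := by
    intro h0
    apply mul_ne_zero hAxx hAyy
    rw [h0, zero_mul] at hzdenval
    exact neg_eq_zero.mp hzdenval.symm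
  have hzeq : z = (v1 * (x * y - A) + A * (y - x)) / (v1 * (y - x) + x * y - A) := by
    rw [eq_div_iff hzden, hv1]
    have key : ((A * (-x + y + z) - x * y * z) / (A - x * y - x * z + y * z)) *
        (A - x * y - x * z + y * z) = A * (-x + y + z) - x * y * z := div_mul_cancel₀ _ hD1
    apply mul_right_cancel₀ hD1
    linear_combination (z * (y - x) - x * y + A) * key
  -- the tower E ⊆ E(x) ⊆ E(x)(y) = F
  set E := adjoin K ({v1, v2, v3} : Set F) with hE
  set Ex : IntermediateField (↥E) F := IntermediateField.adjoin (↥E) {x} with hEx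
  have hEEx : ∀ u : F, u ∈ E → u ∈ Ex := by
    intro u hu
    have h' : algebraMap (↥E) F ⟨u, hu⟩ ∈ Ex := IntermediateField.algebraMap_mem Ex ⟨u, hu⟩
    exact h'
  have hxEx : x ∈ Ex := IntermediateField.subset_adjoin (↥E) {x} rfl
  -- x is quadratic over E
  let c2 : ↥E := ⟨v2 + v3, add_mem hv2E hv3E⟩
  let c1 : ↥E := ⟨-(2 * (A + v2 * v3)), neg_mem (mul_mem h2E (add_mem hAE (mul_mem hv2E hv3E)))⟩
  let c0 : ↥E := ⟨A * (v2 + v3), mul_mem hAE (add_mem hv2E hv3E)⟩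
  let px : Polynomial ↥E := Polynomial.C c2 * Polynomial.X ^ 2 +
    Polynomial.C c1 * Polynomial.X + Polynomial.C c0
  have hc2coeff : px.coeff 2 = c2 := by
    simp [px, Polynomial.coeff_add, Polynomial.coeff_C_mul, Polynomial.coeff_X_pow,
      Polynomial.coeff_C]
  have hpx0 : px ≠ 0 := by
    intro h
    have h' : (0 : Polynomial ↥E).coeff 2 = c2 := h ▸ hc2coeff
    rw [Polynomial.coeff_zero] at h'
    exact hsx0 (by simpa [c2, Subtype.ext_iff] using h'.symm)
  have haevx : Polynomial.aeval x px = 0 := by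
    have : Polynomial.aeval x px = (v2 + v3) * (x * x) - 2 * (A + v2 * v3) * x
        + A * (v2 + v3) := by
      simp [px, c2, c1, c0, IntermediateField.algebraMap_apply]
      ring
    rw [this, hqx]
  have hix : IsIntegral (↥E) x := IsAlgebraic.isIntegral ⟨px, hpx0, haevx⟩
  haveI hfdEx : FiniteDimensional (↥E) ↥Ex := IntermediateField.adjoin.finiteDimensional hix
  have hdx : Module.finrank (↥E) ↥Ex ≤ 2 := by
    rw [hEx, IntermediateField.adjoin.finrank hix]
    exact Polynomial.natDegree_le_iff_degree_le.mpr
      (le_trans (minpoly.degree_le_of_ne_zero _ x hpx0 haevx) Polynomial.degree_quadratic_le)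
  -- y is quadratic over Ex
  let d2 : ↥Ex := ⟨v1 + v3, hEEx _ (add_mem hv1E hv3E)⟩
  let d1 : ↥Ex := ⟨-(2 * (A + v1 * v3)),
    hEEx _ (neg_mem (mul_mem h2E (add_mem hAE (mul_mem hv1E hv3E))))⟩
  let d0 : ↥Ex := ⟨A * (v1 + v3), hEEx _ (mul_mem hAE (add_mem hv1E hv3E))⟩
  let py : Polynomial ↥Ex := Polynomial.C d2 * Polynomial.X ^ 2 +
    Polynomial.C d1 * Polynomial.X + Polynomial.C d0
  have hd2coeff : py.coeff 2 = d2 := by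
    simp [py, Polynomial.coeff_add, Polynomial.coeff_C_mul, Polynomial.coeff_X_pow,
      Polynomial.coeff_C]
  have hpy0 : py ≠ 0 := by
    intro h
    have h' : (0 : Polynomial ↥Ex).coeff 2 = d2 := h ▸ hd2coeff
    rw [Polynomial.coeff_zero] at h'
    exact hsy0 (by simpa [d2, Subtype.ext_iff] using h'.symm)
  have haevy : Polynomial.aeval y py = 0 := by
    have : Polynomial.aeval y py = (v1 + v3) * (y * y) - 2 * (A + v1 * v3) * y
        + A * (v1 + v3) := by
      simp [py, d2, d1, d0, IntermediateField.algebraMap_apply]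
      ring
    rw [this, hqy]
  have hiy : IsIntegral (↥Ex) y := IsAlgebraic.isIntegral ⟨py, hpy0, haevy⟩
  set Ey : IntermediateField (↥Ex) F := IntermediateField.adjoin (↥Ex) {y} with hEy
  have hExEy : ∀ u : F, u ∈ Ex → u ∈ Ey := by
    intro u hu
    have h' : algebraMap (↥Ex) F ⟨u, hu⟩ ∈ Ey := IntermediateField.algebraMap_mem Ey ⟨u, hu⟩
    exact h'
  have hyEy : y ∈ Ey := IntermediateField.subset_adjoin (↥Ex) {y} rfl
  haveI hfdEy : FiniteDimensional (↥Ex) ↥Ey := IntermediateField.adjoin.finiteDimensional hiy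
  have hdy : Module.finrank (↥Ex) ↥Ey ≤ 2 := by
    rw [hEy, IntermediateField.adjoin.finrank hiy]
    exact Polynomial.natDegree_le_iff_degree_le.mpr
      (le_trans (minpoly.degree_le_of_ne_zero _ y hpy0 haevy) Polynomial.degree_quadratic_le)
  -- Ey is everything
  have htopEy : Ey = ⊤ := by
    rw [eq_top_iff]
    intro u _
    have hzmem : z ∈ Ey := by
      rw [hzeq]
      have hv1y : v1 ∈ Ey := hExEy _ (hEEx _ hv1E)
      have hAy : A ∈ Ey := hExEy _ (hEEx _ hAE)
      have hxy : x ∈ Ey := hExEy _ hxEx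
      exact div_mem (add_mem (mul_mem hv1y (sub_mem (mul_mem hxy hyEy) hAy))
        (mul_mem hAy (sub_mem hyEy hxy)))
        (sub_mem (add_mem (mul_mem hv1y (sub_mem hyEy hxy)) (mul_mem hxy hyEy)) hAy)
    refine aux_mem_subfield (K := K) Ey.toSubfield ?_ ?_ u
    · intro r
      exact hExEy _ (hEEx _ (IntermediateField.algebraMap_mem E r))
    · intro i
      match i with
      | 0 => rw [← hx]; exact hExEy _ hxEx
      | 1 => rw [← hy]; exact hyEy
      | 2 => rw [← hz]; exact hzmem
  -- finrank bookkeeping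
  haveI : FiniteDimensional (↥Ex) ↥(⊤ : IntermediateField (↥Ex) F) := htopEy ▸ hfdEy
  haveI hfdExF : FiniteDimensional (↥Ex) F :=
    (IntermediateField.topEquiv (F := ↥Ex) (E := F)).toLinearEquiv.finiteDimensional
  have hExF2 : Module.finrank (↥Ex) F ≤ 2 := by
    have h1 : Module.finrank (↥Ex) F =
        Module.finrank (↥Ex) ↥(⊤ : IntermediateField (↥Ex) F) :=
      ((IntermediateField.topEquiv (F := ↥Ex) (E := F)).toLinearEquiv.finrank_eq).symm
    rw [h1, ← htopEy]
    exact hdy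
  haveI hfdEF : FiniteDimensional (↥E) F := FiniteDimensional.trans (↥E) (↥Ex) F
  have hEF4 : Module.finrank (↥E) F ≤ 4 := by
    have hm := Module.finrank_mul_finrank (↥E) (↥Ex) F
    rw [← hm]
    calc Module.finrank ↥E ↥Ex * Module.finrank ↥Ex F ≤ 2 * 2 :=
          Nat.mul_le_mul hdx hExF2
      _ = 4 := rfl
  -- conclude
  exact (IntermediateField.eq_of_le_of_finrank_le' hle (by rw [hfr4]; exact hEF4)).symm
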